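/- Let τ : ℤ → ℤ[α,β] be the polynomial Somos-4 sequence. Then for every n ∈ ℤ, neither the variable α nor the variable β divides τ(n) in ℤ[α,β]. -/

import Mathlib

open MvPolynomial

lemma somos4_eval_one (a : ℤ → ℤ) (c0 c1 : ℤ) (hc : c0 + c1 = 1)
    (hrec : ∀ n : ℤ, a (n + 2) * a (n - 2) = c0 * (a (n + 1) * a (n - 1)) + c1 * (a n) ^ 2)
    (h1 : a 1 = 1) (h2 : a 2 = 1) (h3 : a 3 = 1) (h4 : a 4 = 1) :
    ∀ n : ℤ, a n = 1 := by
  have key : ∀ n : ℤ, a (n + 1) = 1 ∧ a (n + 2) = 1 ∧ a (n + 3) = 1 ∧ a (n + 4) = 1 := by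
    intro n
    induction n using Int.induction_on with
    | zero => norm_num [h1, h2, h3, h4]
    | succ k ih =>
      obtain ⟨p1, p2, p3, p4⟩ := ih
      have h := hrec ((k : ℤ) + 3)
      rw [show ((k : ℤ) + 3) + 2 = (k : ℤ) + 5 by ring,
          show ((k : ℤ) + 3) - 2 = (k : ℤ) + 1 by ring,
          show ((k : ℤ) + 3) + 1 = (k : ℤ) + 4 by ring,
          show ((k : ℤ) + 3) - 1 = (k : ℤ) + 2 by ring,
          p1, p2, p3, p4] at h
      have h5 : a ((k : ℤ) + 5) = 1 := by linarith [h]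
      refine ⟨?_, ?_, ?_, ?_⟩
      · rw [show ((k : ℤ) + 1) + 1 = (k : ℤ) + 2 by ring]; exact p2
      · rw [show ((k : ℤ) + 1) + 2 = (k : ℤ) + 3 by ring]; exact p3
      · rw [show ((k : ℤ) + 1) + 3 = (k : ℤ) + 4 by ring]; exact p4
      · rw [show ((k : ℤ) + 1) + 4 = (k : ℤ) + 5 by ring]; exact h5
    | pred k ih =>
      obtain ⟨p1, p2, p3, p4⟩ := ih
      have h := hrec (-(k : ℤ) + 2)
      rw [show (-(k : ℤ) + 2) + 2 = -(k : ℤ) + 4 by ring,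
          show (-(k : ℤ) + 2) - 2 = -(k : ℤ) + 0 by ring,
          show (-(k : ℤ) + 2) + 1 = -(k : ℤ) + 3 by ring,
          show (-(k : ℤ) + 2) - 1 = -(k : ℤ) + 1 by ring,
          p1, p2, p3, p4] at h
      have h0 : a (-(k : ℤ) + 0) = 1 := by linarith [h]
      refine ⟨?_, ?_, ?_, ?_⟩
      · rw [show (-(k : ℤ) - 1) + 1 = -(k : ℤ) + 0 by ring]; exact h0
      · rw [show (-(k : ℤ) - 1) + 2 = -(k : ℤ) + 1 by ring]; exact p1
      · rw [show (-(k : ℤ) - 1) + 3 = -(k : ℤ) + 2 by ring]; exact p2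
      · rw [show (-(k : ℤ) - 1) + 4 = -(k : ℤ) + 3 by ring]; exact p3
  intro n
  have := (key (n - 1)).1
  rwa [show (n - 1) + 1 = n by ring] at this

/-- Neither the variable `α` nor the variable `β` divides any term of the
polynomial Somos-4 sequence. -/
theorem somos4_vars_not_dvd (τ : ℤ → MvPolynomial (Fin 2) ℤ)
    (hrec : ∀ n : ℤ, τ (n + 2) * τ (n - 2) =
      X 0 * (τ (n + 1) * τ (n - 1)) + X 1 * (τ n) ^ 2)
    (h1 : τ 1 = 1) (h2 : τ 2 = 1) (h3 : τ 3 = 1) (h4 : τ 4 = 1) :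
    ∀ n : ℤ, ¬ (X 0 ∣ τ n) ∧ ¬ (X 1 ∣ τ n) := by
  have main : ∀ f : Fin 2 → ℤ, f 0 + f 1 = 1 → ∀ n : ℤ, eval f (τ n) = 1 := by
    intro f hf
    apply somos4_eval_one (fun n => eval f (τ n)) (f 0) (f 1) hf
    · intro n
      have := congrArg (eval f) (hrec n)
      simpa using this
    · simp [h1]
    · simp [h2]
    · simp [h3]
    · simp [h4]
  intro n
  constructor
  · rintro ⟨q, hq⟩
    have := main ![0, 1] (by norm_num) n
    rw [hq] at this
    simp at this
  · rintro ⟨q, hq⟩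
    have := main ![1, 0] (by norm_num) n
    rw [hq] at this
    simp at this
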